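/- Let τ > 1, Δt_1 > 0 and Δt_n = Δt_1 τ^{n−1} for n = 1,…,N_t (geometrically increasing step sizes), and let B = B_2^{-1}B_1 be the Trapezoidal-rule time-stepping matrix (the θ-method matrix with θ = 1/2). Then B is diagonalizable as B = V D V^{-1}, where D = diag(2/Δt_1, …, 2/Δt_{N_t}) and V is the unit lower triangular Toeplitz matrix with entries V_{jk} = p_{j−k} for j ≥ k, given by p_0 = 1 and p_n = ∏_{j=1}^{n} (1 + τ^j)/(1 − τ^j) for n ≥ 1. -/

import Mathlib

open Matrix Finset

/-- The θ-method time-discretization matrix `B₁`: lower bidiagonal with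
`(B₁)_{nn} = 1/Δtₙ` and `(B₁)_{n,n-1} = -1/Δtₙ` (0-based indices). -/
noncomputable def timeMatB1 (Nt : ℕ) (dt : Fin Nt → ℝ) : Matrix (Fin Nt) (Fin Nt) ℝ :=
  Matrix.of fun j k =>
    if j = k then 1 / dt j else if (j : ℕ) = (k : ℕ) + 1 then -(1 / dt j) else 0

/-- The θ-method time-discretization matrix `B₂` for the Trapezoidal rule (`θ = 1/2`):
lower bidiagonal with `(B₂)_{nn} = 1/2` and `(B₂)_{n,n-1} = 1/2`. -/
noncomputable def timeMatB2TR (Nt : ℕ) : Matrix (Fin Nt) (Fin Nt) ℝ :=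
  Matrix.of fun j k =>
    if j = k then (1 : ℝ) / 2 else if (j : ℕ) = (k : ℕ) + 1 then (1 : ℝ) / 2 else 0

/-- The unit lower triangular Toeplitz matrix with entries `p_{j-k}` for `j ≥ k`. -/
noncomputable def lowerToeplitz (Nt : ℕ) (p : ℕ → ℝ) : Matrix (Fin Nt) (Fin Nt) ℝ :=
  Matrix.of fun j k => if (k : ℕ) ≤ (j : ℕ) then p ((j : ℕ) - (k : ℕ)) else 0

private lemma bidiag_mul_zero {Nt : ℕ} (f g : Fin Nt → ℝ) (W : Matrix (Fin Nt) (Fin Nt) ℝ)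
    (j k : Fin Nt) (hj : (j : ℕ) = 0) :
    ((Matrix.of fun a b => if a = b then f a else if (a : ℕ) = (b : ℕ) + 1 then g a else 0) * W) j k
      = f j * W j k := by
  rw [Matrix.mul_apply]
  rw [Finset.sum_congr rfl (g := fun l => if l = j then f j * W l k else 0)
    (fun l _ => by
      simp only [Matrix.of_apply]
      rcases eq_or_ne l j with h | h
      · subst h; simp
      · have h2 : ¬ j = l := fun e => h e.symm
        have h3 : ¬ (j : ℕ) = (l : ℕ) + 1 := by omega
        simp [h, h2, h3])]
  simp

private lemma bidiag_mul_succ {Nt : ℕ} (f g : Fin Nt → ℝ) (W : Matrix (Fin Nt) (Fin Nt) ℝ)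
    (j j' k : Fin Nt) (hj : (j : ℕ) = (j' : ℕ) + 1) :
    ((Matrix.of fun a b => if a = b then f a else if (a : ℕ) = (b : ℕ) + 1 then g a else 0) * W) j k
      = f j * W j k + g j * W j' k := by
  rw [Matrix.mul_apply]
  rw [Finset.sum_congr rfl
    (g := fun l => (if l = j then f j * W l k else 0) + (if l = j' then g j * W l k else 0))
    (fun l _ => by
      simp only [Matrix.of_apply]
      rcases eq_or_ne l j with h | h
      · subst h
        have : ¬ l = j' := fun e => by subst e; omega
        simp [this]
      · have h2 : ¬ j = l := fun e => h e.symm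
        rcases eq_or_ne l j' with h4 | h4
        · subst h4
          have h3 : (j : ℕ) = (l : ℕ) + 1 := hj
          simp [h, h2, h3]
        · have h3 : ¬ (j : ℕ) = (l : ℕ) + 1 := fun e => h4 (Fin.ext (by omega))
          simp [h, h2, h3, h4])]
  rw [Finset.sum_add_distrib]
  simp

/-- Diagonalization of the Trapezoidal-rule time-stepping matrix `B = B₂⁻¹ B₁` with
geometrically increasing step sizes `Δtₙ = Δt₁ τ^{n-1}`:  `B = V D V⁻¹`, where
`D = diag(2/Δt₁, …, 2/Δt_{N_t})` and `V` is the unit lower triangular Toeplitz matrix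
built from `p₀ = 1`, `pₙ = ∏_{j=1}^n (1+τ^j)/(1-τ^j)`. -/
theorem trapezoidal_geometric_diagonalization (Nt : ℕ) (hNt : 1 ≤ Nt)
    (τ Δt₁ : ℝ) (hτ : 1 < τ) (hΔt₁ : 0 < Δt₁) :
    let dt : Fin Nt → ℝ := fun n => Δt₁ * τ ^ (n : ℕ)
    let p : ℕ → ℝ := fun n => ∏ j ∈ Finset.Icc 1 n, (1 + τ ^ j) / (1 - τ ^ j)
    let V := lowerToeplitz Nt p
    let D := Matrix.diagonal fun n => 2 / dt n
    IsUnit (timeMatB2TR Nt) ∧ IsUnit V ∧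
      (timeMatB2TR Nt)⁻¹ * timeMatB1 Nt dt = V * D * V⁻¹ := by
  intro dt p V D
  have hp0 : p 0 = 1 := by simp [p]
  have hτ0 : (0:ℝ) < τ := lt_trans one_pos hτ
  have hτpow : ∀ n : ℕ, 1 < τ ^ (n + 1) := fun n => one_lt_pow₀ hτ n.succ_ne_zero
  have hdt : ∀ n : Fin Nt, dt n ≠ 0 := fun n => ne_of_gt (by positivity)
  -- key recursion for p
  have hkey : ∀ n : ℕ, p (n + 1) - p n = τ ^ (n + 1) * (p (n + 1) + p n) := by
    intro n
    have hne : (1:ℝ) - τ ^ (n + 1) ≠ 0 := sub_ne_zero.mpr (by linarith [hτpow n])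
    have hstep' : p (n + 1) = p n * ((1 + τ ^ (n + 1)) / (1 - τ ^ (n + 1))) := by
      show (∏ j ∈ Finset.Icc 1 (n+1), (1 + τ ^ j) / (1 - τ ^ j))
          = (∏ j ∈ Finset.Icc 1 n, (1 + τ ^ j) / (1 - τ ^ j)) * ((1 + τ ^ (n+1)) / (1 - τ ^ (n+1)))
      rw [Finset.prod_Icc_succ_top (by omega)]
    have hstep : p (n + 1) * (1 - τ ^ (n + 1)) = p n * (1 + τ ^ (n + 1)) := by
      rw [hstep', mul_assoc, div_mul_cancel₀ _ hne]
    nlinarith [hstep]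
  -- triangularity and invertibility
  have hVdet : IsUnit V.det := by
    have htri : V.BlockTriangular OrderDual.toDual := by
      intro i j hij
      have : (i : ℕ) < (j : ℕ) := hij
      simp only [V, lowerToeplitz, Matrix.of_apply]
      rw [if_neg (by omega)]
    rw [Matrix.det_of_lowerTriangular V htri]
    have : ∀ i : Fin Nt, V i i = 1 := by
      intro i; simp [V, lowerToeplitz, hp0]
    simp [this]
  have hVunit : IsUnit V := (Matrix.isUnit_iff_isUnit_det V).mpr hVdet
  have hB2det : IsUnit (timeMatB2TR Nt).det := by
    have htri : (timeMatB2TR Nt).BlockTriangular OrderDual.toDual := by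
      intro i j hij
      have h1 : (i : ℕ) < (j : ℕ) := hij
      have h2 : ¬ i = j := fun e => by subst e; omega
      have h3 : ¬ (i : ℕ) = (j : ℕ) + 1 := by omega
      simp [timeMatB2TR, Matrix.of_apply, h2, h3]
    rw [Matrix.det_of_lowerTriangular _ htri]
    have : ∀ i : Fin Nt, timeMatB2TR Nt i i = 1/2 := by
      intro i; simp [timeMatB2TR]
    rw [Finset.prod_congr rfl fun i _ => this i]
    simp
  have hB2unit : IsUnit (timeMatB2TR Nt) := (Matrix.isUnit_iff_isUnit_det _).mpr hB2det
  refine ⟨hB2unit, hVunit, ?_⟩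
  -- main entrywise identity
  have hEq : timeMatB1 Nt dt * V = timeMatB2TR Nt * (V * D) := by
    ext j k
    have hVD : ∀ a b : Fin Nt, (V * D) a b = V a b * (2 / dt b) := fun a b => by
      simp [D, Matrix.mul_diagonal]
    obtain ⟨jv, hjv⟩ := j
    simp only [timeMatB1, timeMatB2TR]
    cases jv with
    | zero =>
      rw [bidiag_mul_zero (fun a => 1 / dt a) (fun a => -(1 / dt a)) V ⟨0, hjv⟩ k rfl,
          bidiag_mul_zero (fun _ => (1:ℝ)/2) (fun _ => (1:ℝ)/2) (V * D) ⟨0, hjv⟩ k rfl,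
          hVD]
      rcases Nat.eq_zero_or_pos (k : ℕ) with hk | hk
      · have hdtk : dt k = dt ⟨0, hjv⟩ := by simp [dt, hk]
        rw [hdtk]
        field_simp
      · have : V ⟨0, hjv⟩ k = 0 := by
          simp only [V, lowerToeplitz, Matrix.of_apply]
          rw [if_neg (by omega)]
        rw [this]; ring
    | succ m =>
      have hm : m < Nt := by omega
      rw [bidiag_mul_succ (fun a => 1 / dt a) (fun a => -(1 / dt a)) V ⟨m+1, hjv⟩ ⟨m, hm⟩ k rfl,
          bidiag_mul_succ (fun _ => (1:ℝ)/2) (fun _ => (1:ℝ)/2) (V * D) ⟨m+1, hjv⟩ ⟨m, hm⟩ k rfl,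
          hVD, hVD]
      rcases lt_trichotomy (k : ℕ) (m + 1) with hk | hk | hk
      · -- k ≤ m : use recursion
        have hk' : (k : ℕ) ≤ m := by omega
        set n := m - (k : ℕ) with hn
        have hVj : V ⟨m+1, hjv⟩ k = p (n + 1) := by
          simp only [V, lowerToeplitz, Matrix.of_apply]
          rw [if_pos (by omega)]
          congr 1 <;> omega
        have hVj' : V ⟨m, hm⟩ k = p n := by
          simp only [V, lowerToeplitz, Matrix.of_apply]
          rw [if_pos (by omega)]
        rw [hVj, hVj']
        have hdtj : dt ⟨m+1, hjv⟩ = dt k * τ ^ (n + 1) := by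
          simp only [dt]
          rw [mul_assoc, ← pow_add]
          congr 2; omega
        rw [hdtj]
        have h1 : dt k ≠ 0 := hdt k
        have h2 : τ ^ (n+1) ≠ 0 := by positivity
        generalize dt k = c at h1 ⊢
        field_simp
        linear_combination hkey n
      · -- k = j : diagonal
        have hVj : V ⟨m+1, hjv⟩ k = 1 := by
          simp only [V, lowerToeplitz, Matrix.of_apply]
          rw [if_pos (by omega)]
          have : (m + 1) - (k : ℕ) = 0 := by omega
          rw [this, hp0]
        have hVj' : V ⟨m, hm⟩ k = 0 := by
          simp only [V, lowerToeplitz, Matrix.of_apply]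
          rw [if_neg (by omega)]
        have hdtk : dt k = dt ⟨m+1, hjv⟩ := by simp [dt, hk]
        rw [hVj, hVj', hdtk]
        field_simp
        norm_num
      · -- k > j : all zero
        have hVj : V ⟨m+1, hjv⟩ k = 0 := by
          simp only [V, lowerToeplitz, Matrix.of_apply]
          rw [if_neg (by omega)]
        have hVj' : V ⟨m, hm⟩ k = 0 := by
          simp only [V, lowerToeplitz, Matrix.of_apply]
          rw [if_neg (by omega)]
        rw [hVj, hVj']; ring
  -- assemble
  have hVV : V * V⁻¹ = 1 := Matrix.mul_nonsing_inv V hVdet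
  have hB2B2 : (timeMatB2TR Nt)⁻¹ * timeMatB2TR Nt = 1 := Matrix.nonsing_inv_mul _ hB2det
  calc (timeMatB2TR Nt)⁻¹ * timeMatB1 Nt dt
      = (timeMatB2TR Nt)⁻¹ * ((timeMatB1 Nt dt * V) * V⁻¹) := by
        rw [Matrix.mul_assoc, hVV, Matrix.mul_one]
    _ = (timeMatB2TR Nt)⁻¹ * ((timeMatB2TR Nt * (V * D)) * V⁻¹) := by rw [hEq]
    _ = ((timeMatB2TR Nt)⁻¹ * timeMatB2TR Nt) * ((V * D) * V⁻¹) := by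
        simp only [Matrix.mul_assoc]
    _ = V * D * V⁻¹ := by rw [hB2B2, Matrix.one_mul, Matrix.mul_assoc]
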